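/- Let 𝒢 be a family of measurable functions from [0,1]^M to ℝ^M such that every measurable function g : [0,1]^M → ℝ^M is the pointwise limit of some sequence of members of 𝒢. Then for every Borel probability measure q on ℝ^M there exists a sequence (g_k), g_k ∈ 𝒢, such that the pushforward measures of the uniform probability measure on [0,1]^M under g_k converge weakly (in distribution) to q; i.e., 𝒢 together with the uniform input distribution yields a universal generative model. -/

import Mathlib

open MeasureTheory Filter

section Aux
open Set ProbabilityTheory Topology

lemma exists_map_uniform_eq_real (ν : Measure ℝ) [IsProbabilityMeasure ν] :
    ∃ Q : ℝ → ℝ, Measurable Q ∧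
      Measure.map Q (volume.restrict (Set.Icc (0:ℝ) 1)) = ν := by
  set f : StieltjesFunction ℝ := cdf ν with hf
  set Qs : ℝ → ℝ := fun t => sInf {x | t ≤ f x} with hQs
  have key : ∀ t ∈ Ioo (0:ℝ) 1, ∀ x : ℝ, Qs t ≤ x ↔ t ≤ f x := by
    intro t ht x
    have hne : {x | t ≤ f x}.Nonempty := by
      obtain ⟨x, hx⟩ := (Tendsto.eventually_const_lt ht.2 (tendsto_cdf_atTop ν)).exists
      exact ⟨x, hx.le⟩
    have hbdd : BddBelow {x | t ≤ f x} := by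
      obtain ⟨x₀, hx₀⟩ :=
        eventually_atBot.mp (Tendsto.eventually_lt_const ht.1 (tendsto_cdf_atBot ν))
      exact ⟨x₀, fun y hy => le_of_not_gt fun h' => absurd hy (not_le.2 (hx₀ y h'.le))⟩
    constructor
    · intro h
      have h' : ∀ y, x < y → t ≤ f y := by
        intro y hy
        obtain ⟨z, hz, hzy⟩ := exists_lt_of_csInf_lt hne (lt_of_le_of_lt h hy)
        exact le_trans hz ((monotone_cdf ν) hzy.le)
      have hcont : Tendsto f (𝓝[>] x) (𝓝 (f x)) :=
        (f.right_continuous x).mono_left (nhdsWithin_mono _ Ioi_subset_Ici_self)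
      exact ge_of_tendsto hcont (eventually_nhdsWithin_of_forall fun y hy => h' y hy)
    · intro h
      exact csInf_le hbdd h
  have hmono : ∀ t ∈ Ioo (0:ℝ) 1, ∀ t' ∈ Ioo (0:ℝ) 1, t ≤ t' → Qs t ≤ Qs t' := by
    intro t ht t' ht' htt'
    have h1 : t' ≤ f (Qs t') := ((key t' ht' (Qs t')).mp le_rfl)
    exact (key t ht (Qs t')).mpr (htt'.trans h1)
  classical
  set Q : ℝ → ℝ := fun t => if h : t ∈ Ioo (0:ℝ) 1 then Qs t else 0 with hQ
  have hQmeas : Measurable Q := by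
    have hm : Monotone (fun p : (Ioo (0:ℝ) 1) => Qs (p : ℝ)) := by
      intro a b hab
      exact hmono a a.2 b b.2 hab
    exact Measurable.dite (f := fun p : (Ioo (0:ℝ) 1) => Qs (p : ℝ)) hm.measurable
      (g := fun _ => (0:ℝ)) measurable_const measurableSet_Ioo
  refine ⟨Q, hQmeas, ?_⟩
  have hres : volume.restrict (Icc (0:ℝ) 1) = volume.restrict (Ioo (0:ℝ) 1) :=
    (Measure.restrict_congr_set Ioo_ae_eq_Icc).symm
  rw [hres]
  haveI : IsProbabilityMeasure (volume.restrict (Ioo (0:ℝ) 1)) := by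
    constructor
    simp [Real.volume_Ioo]
  haveI : IsProbabilityMeasure (Measure.map Q (volume.restrict (Ioo (0:ℝ) 1))) :=
    Measure.isProbabilityMeasure_map hQmeas.aemeasurable
  refine Measure.ext_of_Iic _ _ (fun a => ?_)
  rw [Measure.map_apply hQmeas measurableSet_Iic, Measure.restrict_apply
    (hQmeas measurableSet_Iic)]
  have hset : Q ⁻¹' Iic a ∩ Ioo 0 1 = Ioo (0:ℝ) 1 ∩ Iic (f a) := by
    ext t
    simp only [mem_inter_iff, mem_preimage, mem_Iic, hQ]
    constructor
    · rintro ⟨h1, h2⟩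
      rw [dif_pos h2] at h1
      exact ⟨h2, (key t h2 a).mp h1⟩
    · rintro ⟨h2, h1⟩
      refine ⟨?_, h2⟩
      rw [dif_pos h2]
      exact (key t h2 a).mpr h1
  rw [hset, ← ofReal_cdf ν a]
  have h0 : 0 ≤ f a := cdf_nonneg ν a
  have h1 : f a ≤ 1 := cdf_le_one ν a
  rcases lt_or_eq_of_le h1 with h1' | h1'
  · have : Ioo (0:ℝ) 1 ∩ Iic (f a) = Ioc 0 (f a) := by
      ext t
      simp only [mem_inter_iff, mem_Ioo, mem_Iic, mem_Ioc]
      exact ⟨fun ⟨⟨a1, _⟩, b⟩ => ⟨a1, b⟩, fun ⟨a1, b⟩ => ⟨⟨a1, lt_of_le_of_lt b h1'⟩, b⟩⟩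
    rw [this, Real.volume_Ioc, sub_zero]
  · have : Ioo (0:ℝ) 1 ∩ Iic (f a) = Ioo 0 1 := by
      rw [inter_eq_left]
      intro t ht
      exact le_of_lt (h1' ▸ ht.2)
    rw [this, Real.volume_Ioo, sub_zero, ← h1']
lemma map_eval_cube (M : ℕ) (i : Fin M) :
    Measure.map (fun x : Fin M → ℝ => x i)
      (volume.restrict (Set.univ.pi fun _ : Fin M => Set.Icc (0 : ℝ) 1))
      = volume.restrict (Set.Icc (0:ℝ) 1) := by
  classical
  refine Measure.ext (fun s hs => ?_)
  rw [Measure.map_apply (measurable_pi_apply i) hs,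
    Measure.restrict_apply ((measurable_pi_apply i) hs), Measure.restrict_apply hs]
  have hset : (fun x : Fin M → ℝ => x i) ⁻¹' s ∩
      (Set.univ.pi fun _ : Fin M => Set.Icc (0 : ℝ) 1)
      = Set.univ.pi (fun j => if j = i then s ∩ Set.Icc (0:ℝ) 1 else Set.Icc (0:ℝ) 1) := by
    ext x
    constructor
    · rintro ⟨h1, h2⟩
      intro j _
      by_cases hj : j = i
      · subst hj
        simpa using ⟨h1, h2 j (Set.mem_univ j)⟩
      · simpa [hj] using h2 j (Set.mem_univ j)
    · intro h
      have hi' : x i ∈ s ∩ Set.Icc (0:ℝ) 1 := by simpa using h i (Set.mem_univ i)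
      refine ⟨hi'.1, fun j _ => ?_⟩
      have hj := h j (Set.mem_univ j)
      by_cases hji : j = i
      · subst hji
        exact hi'.2
      · simpa [hji] using hj
  rw [hset]
  have : (volume : Measure (Fin M → ℝ)) = Measure.pi (fun _ => volume) := rfl
  rw [this, Measure.pi_pi]
  have : ∀ j : Fin M, (volume (if j = i then s ∩ Set.Icc (0:ℝ) 1 else Set.Icc (0:ℝ) 1))
      = if j = i then volume (s ∩ Set.Icc (0:ℝ) 1) else 1 := by
    intro j
    split_ifs <;> simp [Real.volume_Icc]
  simp_rw [this]
  rw [Finset.prod_ite_eq' Finset.univ i (fun _ => volume (s ∩ Set.Icc (0:ℝ) 1))]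
  simp

lemma exists_map_cube_eq (M : ℕ) (q : Measure (Fin M → ℝ)) [IsProbabilityMeasure q] :
    ∃ g : (Fin M → ℝ) → (Fin M → ℝ), Measurable g ∧
      Measure.map g (volume.restrict (Set.univ.pi fun _ : Fin M => Set.Icc (0 : ℝ) 1)) = q := by
  classical
  set cube := Set.univ.pi fun _ : Fin M => Set.Icc (0 : ℝ) 1 with hcube
  have hcubemeas : MeasurableSet cube :=
    MeasurableSet.univ_pi (fun _ => measurableSet_Icc)
  haveI : IsProbabilityMeasure (volume.restrict cube) := by
    constructor
    rw [Measure.restrict_apply_univ]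
    have : (volume : Measure (Fin M → ℝ)) = Measure.pi (fun _ => volume) := rfl
    rw [hcube, this, Measure.pi_pi]
    simp [Real.volume_Icc]
  rcases Nat.eq_zero_or_pos M with hM | hM
  · -- subsingleton case
    subst hM
    haveI : Subsingleton (Fin 0 → ℝ) := ⟨fun a b => funext fun i => i.elim0⟩
    refine ⟨id, measurable_id, ?_⟩
    rw [Measure.map_id]
    refine Measure.ext (fun s hs => ?_)
    rcases s.eq_empty_or_nonempty with h | ⟨x, hx⟩
    · simp [h]
    · have : s = Set.univ := Set.eq_univ_iff_forall.mpr fun y => Subsingleton.elim x y ▸ hx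
      simp [this]
  · set i : Fin M := ⟨0, hM⟩
    set e : (Fin M → ℝ) → ℝ := MeasureTheory.embeddingReal (Fin M → ℝ) with he
    have hemb : MeasurableEmbedding e := MeasureTheory.measurableEmbedding_embeddingReal _
    set ν : Measure ℝ := Measure.map e q with hν
    haveI : IsProbabilityMeasure ν := Measure.isProbabilityMeasure_map hemb.measurable.aemeasurable
    obtain ⟨Q, hQmeas, hQmap⟩ := exists_map_uniform_eq_real ν
    set g₀ : ℝ → (Fin M → ℝ) := fun y =>
      if h : y ∈ Set.range e then Set.rangeSplitting e ⟨y, h⟩ else (fun _ => 0) with hg₀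
    have hg₀meas : Measurable g₀ := by
      exact Measurable.dite (f := fun p : (Set.range e) => Set.rangeSplitting e p)
        hemb.measurable_rangeSplitting
        (g := fun _ => (fun _ => (0:ℝ))) measurable_const hemb.measurableSet_range
    have hg₀e : ∀ x, g₀ (e x) = x := by
      intro x
      have hmem : e x ∈ Set.range e := Set.mem_range_self x
      rw [hg₀]
      simp only [hmem, dif_pos]
      apply hemb.injective
      exact Set.apply_rangeSplitting e ⟨e x, hmem⟩
    refine ⟨g₀ ∘ Q ∘ (fun x => x i), (hg₀meas.comp hQmeas).comp (measurable_pi_apply i), ?_⟩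
    rw [show g₀ ∘ Q ∘ (fun x : Fin M → ℝ => x i)
        = (g₀ ∘ Q) ∘ (fun x : Fin M → ℝ => x i) from rfl,
      ← Measure.map_map (hg₀meas.comp hQmeas) (measurable_pi_apply i),
      map_eval_cube M i, ← Measure.map_map hg₀meas hQmeas, hQmap, hν,
      Measure.map_map hg₀meas hemb.measurable]
    have : g₀ ∘ e = id := funext hg₀e
    rw [this, Measure.map_id]

end Aux

/-- If a family `𝒢` of measurable functions `[0,1]^M → ℝ^M` is pointwise dense
in the set of all measurable functions on the cube, then `𝒢` together with the uniform input
distribution on `[0,1]^M` yields a universal generative model: every Borel probability measure `q`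
on `ℝ^M` is the weak (in distribution) limit of pushforwards of the uniform measure under members
of `𝒢`. -/
theorem stmt_2 (M : ℕ) (𝒢 : Set ((Fin M → ℝ) → (Fin M → ℝ)))
    (hmeas : ∀ g ∈ 𝒢, Measurable g)
    (hdense : ∀ g : (Fin M → ℝ) → (Fin M → ℝ), Measurable g →
      ∃ s : ℕ → (Fin M → ℝ) → (Fin M → ℝ), (∀ k, s k ∈ 𝒢) ∧
        ∀ x ∈ Set.univ.pi fun _ : Fin M => Set.Icc (0 : ℝ) 1,
          Tendsto (fun k => s k x) atTop (nhds (g x))) :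
    ∀ q : Measure (Fin M → ℝ), IsProbabilityMeasure q →
      ∃ s : ℕ → (Fin M → ℝ) → (Fin M → ℝ), (∀ k, s k ∈ 𝒢) ∧
        ∀ F : BoundedContinuousFunction (Fin M → ℝ) ℝ,
          Tendsto
            (fun k => ∫ y, F y ∂(Measure.map (s k)
              (volume.restrict (Set.univ.pi fun _ : Fin M => Set.Icc (0 : ℝ) 1))))
            atTop (nhds (∫ y, F y ∂q)) := by
  intro q hq
  set cube := Set.univ.pi fun _ : Fin M => Set.Icc (0 : ℝ) 1 with hcube
  have hcubemeas : MeasurableSet cube :=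
    MeasurableSet.univ_pi (fun _ => measurableSet_Icc)
  set μ := volume.restrict cube with hμ
  haveI : IsProbabilityMeasure μ := by
    constructor
    rw [hμ, Measure.restrict_apply_univ]
    have h' : (volume : Measure (Fin M → ℝ)) = Measure.pi (fun _ => volume) := rfl
    rw [hcube, h', Measure.pi_pi]
    simp [Real.volume_Icc]
  obtain ⟨g, hg, hgmap⟩ := exists_map_cube_eq M q
  obtain ⟨s, hs𝒢, hsconv⟩ := hdense g hg
  refine ⟨s, hs𝒢, fun F => ?_⟩
  have hint : ∀ k, ∫ y, F y ∂(Measure.map (s k) μ) = ∫ x, F (s k x) ∂μ := fun k =>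
    integral_map (hmeas (s k) (hs𝒢 k)).aemeasurable
      F.continuous.measurable.aestronglyMeasurable
  have hintg : ∫ y, F y ∂q = ∫ x, F (g x) ∂μ := by
    rw [← hgmap]
    exact integral_map hg.aemeasurable F.continuous.measurable.aestronglyMeasurable
  simp only [hμ] at hint hintg ⊢
  rw [hintg]
  simp_rw [hint]
  refine tendsto_integral_of_dominated_convergence (fun _ => ‖F‖)
    (fun k => (F.continuous.measurable.comp (hmeas (s k) (hs𝒢 k))).aestronglyMeasurable)
    (integrable_const _) (fun k => ?_) ?_
  · exact Eventually.of_forall fun x => F.norm_coe_le_norm (s k x)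
  · filter_upwards [ae_restrict_mem hcubemeas] with x hx
    exact (F.continuous.tendsto (g x)).comp (hsconv x hx)
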